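/- arXiv:1301.7474 — 3 statements merged into one kernel-verified Lean document; each statement's English description precedes it below -/
import Mathlib

section
/- Let a, b, c be real numbers with c > 0 and c − a − b > 0, and suppose neither c − a nor c − b is a nonpositive integer. Then the Gauss hypergeometric series at 1 satisfies ₂F₁(a, b; c; 1) = ∑_{n≥0} (a)ₙ(b)ₙ/((c)ₙ n!) = Γ(c)Γ(c−a−b) / (Γ(c−a)Γ(c−b)). -/
open scoped BigOperators
open Filter Topology

/-- The Pochhammer symbol `(a)ₙ = a (a+1) ⋯ (a+n-1)`. -/
noncomputable def poch (a : ℝ) (n : ℕ) : ℝ := ∏ i ∈ Finset.range n, (a + i)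

/-- The Gauss hypergeometric series `₂F₁(a, b; c; x)`. -/
noncomputable def F21 (a b c x : ℝ) : ℝ :=
  ∑' n : ℕ, poch a n * poch b n / (poch c n * (Nat.factorial n : ℝ)) * x ^ n

namespace GaussAux

noncomputable def t (a b c : ℝ) (n : ℕ) : ℝ :=
  poch a n * poch b n / (poch c n * (Nat.factorial n : ℝ))

lemma poch_zero (x : ℝ) : poch x 0 = 1 := by simp [poch]

lemma poch_succ (x : ℝ) (n : ℕ) : poch x (n + 1) = poch x n * (x + n) :=
  Finset.prod_range_succ _ _

lemma poch_pos {x : ℝ} (hx : 0 < x) (n : ℕ) : 0 < poch x n :=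
  Finset.prod_pos fun i _ => by positivity

lemma poch_ne_zero {x : ℝ} (hx : ∀ m : ℕ, x ≠ -(m : ℝ)) (n : ℕ) : poch x n ≠ 0 := by
  refine Finset.prod_ne_zero_iff.2 fun i _ => ?_
  intro h
  exact hx i (by linarith)

lemma c_mul_poch_add_one (c : ℝ) (n : ℕ) : c * poch (c + 1) n = poch c n * (c + n) := by
  induction n with
  | zero => simp [poch_zero]
  | succ n ih =>
    rw [poch_succ, poch_succ, ← mul_assoc, ih]
    push_cast; ring

lemma t_zero (a b c : ℝ) : t a b c 0 = 1 := by simp [t, poch_zero]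

/-- key termwise identity for the contiguous relation -/
lemma key_identity (a b : ℝ) {c : ℝ} (hc : 0 < c) (n : ℕ) :
    (c - a) * (c - b) / c * t a b (c + 1) n - (c - a - b) * t a b c n
      = ((n : ℝ) + 1) * t a b c (n + 1) - (n : ℝ) * t a b c n := by
  have hrc : poch c n ≠ 0 := (poch_pos hc n).ne'
  have hcn : c + (n : ℝ) ≠ 0 := by positivity
  have hfac : ((Nat.factorial n : ℝ)) ≠ 0 := by positivity
  have hpc1 : poch (c + 1) n = poch c n * (c + n) / c := by
    rw [eq_div_iff hc.ne', mul_comm (poch (c+1) n) c, c_mul_poch_add_one]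
  simp only [t, poch_succ, hpc1, Nat.factorial_succ]
  push_cast
  field_simp
  ring

lemma GammaSeq_eq (x : ℝ) (n : ℕ) :
    Real.GammaSeq x n = (n : ℝ) ^ x * (Nat.factorial n : ℝ) / poch x (n + 1) := rfl

lemma t_eq_gammaSeq {a b c : ℝ} (hc : 0 < c) {n : ℕ} (hn : 1 ≤ n) :
    ((n : ℝ) + 1) * (n : ℝ) ^ (c - a - b) * t a b c (n + 1)
      = Real.GammaSeq c n / (Real.GammaSeq a n * Real.GammaSeq b n) := by
  have hn0 : (0 : ℝ) < n := by exact_mod_cast hn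
  have hPc : (0 : ℝ) < poch c (n + 1) := poch_pos hc _
  have hra : (0 : ℝ) < (n : ℝ) ^ a := Real.rpow_pos_of_pos hn0 a
  have hrb : (0 : ℝ) < (n : ℝ) ^ b := Real.rpow_pos_of_pos hn0 b
  have hfac : (0 : ℝ) < (Nat.factorial n : ℝ) := by positivity
  have hrs : (n : ℝ) ^ (c - a - b) = (n : ℝ) ^ c / ((n : ℝ) ^ a * (n : ℝ) ^ b) := by
    rw [show c - a - b = c - (a + b) by ring, Real.rpow_sub hn0, Real.rpow_add hn0]
  rw [GammaSeq_eq, GammaSeq_eq, GammaSeq_eq, t, hrs, Nat.factorial_succ]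
  push_cast
  field_simp

lemma exists_limit (a b : ℝ) {c : ℝ} (hc : 0 < c) :
    ∃ L : ℝ, Tendsto (fun n : ℕ => ((n : ℝ) + 1) * (n : ℝ) ^ (c - a - b) * t a b c (n + 1))
      atTop (𝓝 L) := by
  by_cases ha : ∀ m : ℕ, a ≠ -(m : ℝ)
  · by_cases hb : ∀ m : ℕ, b ≠ -(m : ℝ)
    · refine ⟨Real.Gamma c / (Real.Gamma a * Real.Gamma b), ?_⟩
      have hne : Real.Gamma a * Real.Gamma b ≠ 0 :=
        mul_ne_zero (Real.Gamma_ne_zero ha) (Real.Gamma_ne_zero hb)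
      have := ((Real.GammaSeq_tendsto_Gamma c).div
        (((Real.GammaSeq_tendsto_Gamma a).mul (Real.GammaSeq_tendsto_Gamma b))) hne)
      refine this.congr' ?_
      filter_upwards [eventually_ge_atTop 1] with n hn
      exact (t_eq_gammaSeq hc hn).symm
    · push_neg at hb
      obtain ⟨m, hm⟩ := hb
      refine ⟨0, tendsto_const_nhds.congr' ?_⟩
      filter_upwards [eventually_ge_atTop m] with n hn
      have : poch b (n + 1) = 0 := by
        refine Finset.prod_eq_zero (i := m) (Finset.mem_range.2 (by omega)) ?_
        rw [hm]; ring
      simp [t, this]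
  · push_neg at ha
    obtain ⟨m, hm⟩ := ha
    refine ⟨0, tendsto_const_nhds.congr' ?_⟩
    filter_upwards [eventually_ge_atTop m] with n hn
    have : poch a (n + 1) = 0 := by
      refine Finset.prod_eq_zero (i := m) (Finset.mem_range.2 (by omega)) ?_
      rw [hm]; ring
    simp [t, this]

lemma abs_fn_eq {a b c : ℝ} (n : ℕ) :
    |((n : ℝ) + 1) * (n : ℝ) ^ (c - a - b) * t a b c (n + 1)|
      = ((n : ℝ) + 1) * (n : ℝ) ^ (c - a - b) * |t a b c (n + 1)| := by
  rw [abs_mul, abs_mul, abs_of_nonneg (by positivity : (0:ℝ) ≤ (n : ℝ) + 1),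
    abs_of_nonneg (Real.rpow_nonneg (Nat.cast_nonneg n) _)]

lemma abs_t_succ_tendsto (a b : ℝ) {c : ℝ} (hc : 0 < c) (hcab : 0 < c - a - b) :
    Tendsto (fun n : ℕ => ((n : ℝ) + 1) * |t a b c (n + 1)|) atTop (𝓝 0) := by
  obtain ⟨L, hL⟩ := exists_limit a b hc
  have h2 : Tendsto (fun n : ℕ => (n : ℝ) ^ (-(c - a - b))) atTop (𝓝 0) :=
    (tendsto_rpow_neg_atTop hcab).comp tendsto_natCast_atTop_atTop
  have h3 := hL.abs.mul h2
  rw [mul_zero] at h3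
  refine h3.congr' ?_
  filter_upwards [eventually_ge_atTop 1] with n hn
  have hn0 : (0 : ℝ) < n := by exact_mod_cast hn
  rw [abs_fn_eq]
  rw [mul_assoc, mul_comm (|t a b c (n + 1)|), ← mul_assoc, mul_assoc _ _ ((n:ℝ) ^ (-(c-a-b))),
    ← Real.rpow_add hn0]
  simp

lemma tendsto_mul_abs_t (a b : ℝ) {c : ℝ} (hc : 0 < c) (hcab : 0 < c - a - b) :
    Tendsto (fun n : ℕ => (n : ℝ) * |t a b c n|) atTop (𝓝 0) := by
  have := abs_t_succ_tendsto a b hc hcab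
  rw [← tendsto_add_atTop_iff_nat 1]
  refine this.congr fun n => ?_
  push_cast
  ring_nf

lemma tendsto_mul_t (a b : ℝ) {c : ℝ} (hc : 0 < c) (hcab : 0 < c - a - b) :
    Tendsto (fun n : ℕ => (n : ℝ) * t a b c n) atTop (𝓝 0) := by
  refine squeeze_zero_norm (fun n => ?_) (tendsto_mul_abs_t a b hc hcab)
  rw [Real.norm_eq_abs, abs_mul, abs_of_nonneg (Nat.cast_nonneg n)]

lemma summable_abs_t (a b : ℝ) {c : ℝ} (hc : 0 < c) (hcab : 0 < c - a - b) :
    Summable (fun n : ℕ => |t a b c n|) := by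
  obtain ⟨L, hL⟩ := exists_limit a b hc
  have hg : Summable (fun n : ℕ => (|L| + 1) * (n : ℝ) ^ (-(1 + (c - a - b)))) :=
    (Real.summable_nat_rpow.mpr (by linarith)).mul_left _
  rw [← summable_nat_add_iff 1]
  refine Summable.of_norm_bounded_eventually_nat hg ?_
  filter_upwards [hL.abs.eventually_lt_const (lt_add_one |L|), eventually_ge_atTop 1]
    with n h1 hn1
  have hn0 : (0 : ℝ) < n := by exact_mod_cast hn1
  rw [abs_fn_eq] at h1
  have hpow : (0 : ℝ) < (n : ℝ) ^ (1 + (c - a - b)) := Real.rpow_pos_of_pos hn0 _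
  have hkey : (n : ℝ) ^ (1 + (c - a - b)) * |t a b c (n + 1)| ≤ |L| + 1 := by
    refine le_trans ?_ h1.le
    rw [Real.rpow_add hn0, Real.rpow_one]
    have : (n : ℝ) * (n : ℝ) ^ (c - a - b) ≤ ((n : ℝ) + 1) * (n : ℝ) ^ (c - a - b) :=
      mul_le_mul_of_nonneg_right (by linarith) (Real.rpow_nonneg hn0.le _)
    nlinarith [abs_nonneg (t a b c (n + 1))]
  rw [Real.norm_eq_abs, abs_abs]
  rw [Real.rpow_neg hn0.le, mul_comm (|L| + 1)]
  calc |t a b c (n + 1)| = ((n : ℝ) ^ (1 + (c - a - b)))⁻¹ *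
        ((n : ℝ) ^ (1 + (c - a - b)) * |t a b c (n + 1)|) := by
        field_simp
    _ ≤ ((n : ℝ) ^ (1 + (c - a - b)))⁻¹ * (|L| + 1) :=
        mul_le_mul_of_nonneg_left hkey (by positivity)

lemma summable_t (a b : ℝ) {c : ℝ} (hc : 0 < c) (hcab : 0 < c - a - b) :
    Summable (t a b c) :=
  (summable_abs_t a b hc hcab).of_abs

lemma poch_mono {x y : ℝ} (hx : 0 < x) (hxy : x ≤ y) (n : ℕ) : poch x n ≤ poch y n :=
  Finset.prod_le_prod (fun i _ => by positivity) fun i _ => by linarith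

lemma mul_poch_le {x y : ℝ} (hx : 0 < x) (hxy : x ≤ y) (n : ℕ) :
    y * poch x (n + 1) ≤ x * poch y (n + 1) := by
  induction n with
  | zero => simp [poch_succ, poch]; nlinarith
  | succ n ih =>
    rw [poch_succ x (n + 1), poch_succ y (n + 1), ← mul_assoc, ← mul_assoc]
    have h1 : (0:ℝ) < x + (n + 1 : ℕ) := by positivity
    have h2 : (0:ℝ) ≤ x * poch y (n + 1) := by
      have := poch_pos (lt_of_lt_of_le hx hxy) (n + 1); positivity
    calc y * poch x (n + 1) * (x + (n + 1 : ℕ))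
        ≤ x * poch y (n + 1) * (x + (n + 1 : ℕ)) := mul_le_mul_of_nonneg_right ih h1.le
      _ ≤ x * poch y (n + 1) * (y + (n + 1 : ℕ)) :=
          mul_le_mul_of_nonneg_left (by linarith) h2

lemma abs_t_succ_le (a b : ℝ) {x y : ℝ} (hx : 0 < x) (hxy : x ≤ y) (n : ℕ) :
    |t a b y (n + 1)| ≤ x / y * |t a b x (n + 1)| := by
  have hy : 0 < y := lt_of_lt_of_le hx hxy
  have hpx := poch_pos hx (n + 1)
  have hpy := poch_pos hy (n + 1)
  have hfac : (0:ℝ) < (Nat.factorial (n + 1) : ℝ) := by positivity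
  set A := |poch a (n + 1) * poch b (n + 1)| with hA
  have hA0 : 0 ≤ A := abs_nonneg _
  rw [t, t, abs_div, abs_div,
    abs_of_pos (show (0:ℝ) < poch y (n+1) * (Nat.factorial (n+1) : ℝ) by positivity),
    abs_of_pos (show (0:ℝ) < poch x (n+1) * (Nat.factorial (n+1) : ℝ) by positivity),
    div_mul_div_comm, div_le_div_iff₀ (by positivity) (by positivity)]
  have h := mul_le_mul_of_nonneg_left (mul_poch_le hx hxy n) (mul_nonneg hA0 hfac.le)
  calc A * (y * (poch x (n+1) * (Nat.factorial (n+1) : ℝ)))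
      = (A * (Nat.factorial (n+1) : ℝ)) * (y * poch x (n+1)) := by ring
    _ ≤ (A * (Nat.factorial (n+1) : ℝ)) * (x * poch y (n+1)) := h
    _ = x * A * (poch y (n+1) * (Nat.factorial (n+1) : ℝ)) := by ring

lemma contiguous (a b : ℝ) {c : ℝ} (hc : 0 < c) (hcab : 0 < c - a - b) :
    ∑' n, t a b c n = (c - a) * (c - b) / (c * (c - a - b)) * ∑' n, t a b (c + 1) n := by
  have hS : Summable (t a b c) := summable_t a b hc hcab
  have hS' : Summable (t a b (c + 1)) := summable_t a b (by linarith) (by linarith)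
  have hT := tendsto_mul_t a b hc hcab
  have key : ∀ N : ℕ, (c - a) * (c - b) / c * (∑ n ∈ Finset.range N, t a b (c + 1) n)
      - (c - a - b) * (∑ n ∈ Finset.range N, t a b c n) = (N : ℝ) * t a b c N := by
    intro N
    rw [Finset.mul_sum, Finset.mul_sum, ← Finset.sum_sub_distrib]
    rw [Finset.sum_congr rfl fun n _ => key_identity a b hc n]
    have := Finset.sum_range_sub (fun n : ℕ => (n : ℝ) * t a b c n) N
    simp only [Nat.cast_zero, zero_mul, sub_zero] at this
    rw [← this]
    exact Finset.sum_congr rfl fun n _ => by push_cast; ring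
  have l1 := hS.hasSum.tendsto_sum_nat
  have l2 := hS'.hasSum.tendsto_sum_nat
  have l3 := (l2.const_mul ((c - a) * (c - b) / c)).sub (l1.const_mul (c - a - b))
  have l4 : Tendsto (fun N : ℕ => (N : ℝ) * t a b c N) atTop
      (𝓝 ((c - a) * (c - b) / c * ∑' n, t a b (c + 1) n - (c - a - b) * ∑' n, t a b c n)) :=
    l3.congr key
  have heq : (c - a) * (c - b) / c * ∑' n, t a b (c + 1) n
      - (c - a - b) * ∑' n, t a b c n = 0 := tendsto_nhds_unique l4 hT
  have hc0 : c ≠ 0 := hc.ne'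
  have hcab0 : c - a - b ≠ 0 := hcab.ne'
  field_simp at heq ⊢
  linarith

lemma iterate (a b : ℝ) {c : ℝ} (hc : 0 < c) (hcab : 0 < c - a - b) (k : ℕ) :
    ∑' n, t a b c n = poch (c - a) k * poch (c - b) k / (poch c k * poch (c - a - b) k)
      * ∑' n, t a b (c + k) n := by
  induction k with
  | zero => simp [poch_zero]
  | succ k ih =>
    have hck : 0 < c + k := by positivity
    have hckab : 0 < (c + k) - a - b := by push_cast; linarith [Nat.cast_nonneg (α := ℝ) k]
    have hstep := contiguous a b hck hckab
    have hcast : c + ((k : ℕ) + 1 : ℕ) = (c + k) + 1 := by push_cast; ring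
    rw [hcast, ih, hstep]
    have h1 : (0:ℝ) < poch c k := poch_pos hc k
    have h2 : (0:ℝ) < poch (c - a - b) k := poch_pos hcab k
    have h3 : c + (k:ℝ) ≠ 0 := hck.ne'
    have h4 : c + (k:ℝ) - a - b ≠ 0 := hckab.ne'
    rw [poch_succ, poch_succ, poch_succ, poch_succ]
    field_simp
    ring

set_option maxHeartbeats 1000000 in
lemma tendsto_ratio (a b : ℝ) {c : ℝ} (hc : 0 < c) (hcab : 0 < c - a - b)
    (hca : ∀ m : ℕ, c - a ≠ -(m : ℝ)) (hcb : ∀ m : ℕ, c - b ≠ -(m : ℝ)) :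
    Tendsto (fun k : ℕ => poch (c - a) k * poch (c - b) k / (poch c k * poch (c - a - b) k))
      atTop (𝓝 (Real.Gamma c * Real.Gamma (c - a - b)
        / (Real.Gamma (c - a) * Real.Gamma (c - b)))) := by
  rw [← tendsto_add_atTop_iff_nat 1]
  have hne : Real.Gamma (c - a) * Real.Gamma (c - b) ≠ 0 :=
    mul_ne_zero (Real.Gamma_ne_zero hca) (Real.Gamma_ne_zero hcb)
  have h := ((Real.GammaSeq_tendsto_Gamma c).mul
    (Real.GammaSeq_tendsto_Gamma (c - a - b))).div
    ((Real.GammaSeq_tendsto_Gamma (c - a)).mul (Real.GammaSeq_tendsto_Gamma (c - b))) hne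
  refine h.congr' ?_
  filter_upwards [eventually_ge_atTop 1] with k hk
  have hk0 : (0 : ℝ) < k := by exact_mod_cast hk
  have hPca : poch (c - a) (k + 1) ≠ 0 := poch_ne_zero hca _
  have hPcb : poch (c - b) (k + 1) ≠ 0 := poch_ne_zero hcb _
  have hPc : (0:ℝ) < poch c (k + 1) := poch_pos hc _
  have hPcab : (0:ℝ) < poch (c - a - b) (k + 1) := poch_pos hcab _
  have hfac : (0:ℝ) < (Nat.factorial k : ℝ) := by positivity
  have hW : (0:ℝ) < (k : ℝ) ^ (c - a - b) := Real.rpow_pos_of_pos hk0 _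
  have hXc : (k : ℝ) ^ c = (k : ℝ) ^ (c - a) * (k : ℝ) ^ (c - b) / (k : ℝ) ^ (c - a - b) := by
    rw [eq_div_iff hW.ne', ← Real.rpow_add hk0, ← Real.rpow_add hk0]
    ring_nf
  have hXa : (0:ℝ) < (k : ℝ) ^ (c - a) := Real.rpow_pos_of_pos hk0 _
  have hXb : (0:ℝ) < (k : ℝ) ^ (c - b) := Real.rpow_pos_of_pos hk0 _
  simp only [Pi.div_apply, Pi.mul_apply]
  rw [GammaSeq_eq, GammaSeq_eq, GammaSeq_eq, GammaSeq_eq, hXc]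
  rw [div_mul_div_comm, div_mul_div_comm, div_div_div_comm]
  rw [div_eq_div_iff (by positivity) (by positivity)]
  field_simp

set_option maxHeartbeats 2000000 in
lemma tendsto_tail (a b : ℝ) {c : ℝ} (hc : 0 < c) (hcab : 0 < c - a - b) :
    Tendsto (fun k : ℕ => ∑' n, t a b (c + k) n) atTop (𝓝 1) := by
  have hM : Summable (fun n : ℕ => |t a b c (n + 1)|) :=
    (_root_.summable_nat_add_iff (f := fun n : ℕ => |t a b c n|) 1).2
      (summable_abs_t a b hc hcab)
  set M := ∑' n : ℕ, |t a b c (n + 1)| with hMdef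
  have hM0 : 0 ≤ M := tsum_nonneg fun n => abs_nonneg _
  have hbound : ∀ k : ℕ, ‖(∑' n, t a b (c + k) n) - 1‖ ≤ c / (c + k) * M := by
    intro k
    rw [Real.norm_eq_abs]
    have hck : 0 < c + (k : ℝ) := by positivity
    have hckab : 0 < (c + k) - a - b := by push_cast; linarith [Nat.cast_nonneg (α := ℝ) k]
    have hle : c ≤ c + (k : ℝ) := by linarith [Nat.cast_nonneg (α := ℝ) k]
    have hSk : Summable (t a b (c + k)) := summable_t a b hck hckab
    have hshift : (∑' n, t a b (c + k) n) = 1 + ∑' n : ℕ, t a b (c + k) (n + 1) := by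
      rw [Summable.tsum_eq_zero_add hSk, t_zero]
    have hSk' : Summable (fun n : ℕ => t a b (c + k) (n + 1)) :=
      (_root_.summable_nat_add_iff (f := t a b (c + k)) 1).2 hSk
    have hSk'abs : Summable (fun n : ℕ => |t a b (c + k) (n + 1)|) :=
      (_root_.summable_nat_add_iff (f := fun n : ℕ => |t a b (c + k) n|) 1).2
        (summable_abs_t a b hck hckab)
    rw [hshift]
    rw [add_sub_cancel_left]
    calc |∑' n : ℕ, t a b (c + k) (n + 1)| ≤ ∑' n : ℕ, |t a b (c + k) (n + 1)| := by
          have := norm_tsum_le_tsum_norm (f := fun n : ℕ => t a b (c + k) (n + 1))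
            (by simpa only [Real.norm_eq_abs] using hSk'abs)
          simpa only [Real.norm_eq_abs] using this
      _ ≤ ∑' n : ℕ, c / (c + k) * |t a b c (n + 1)| := by
          refine Summable.tsum_le_tsum (fun n => abs_t_succ_le a b hc hle n) hSk'abs (hM.mul_left _)
      _ = c / (c + k) * M := by rw [tsum_mul_left]
  have hg : Tendsto (fun k : ℕ => c / (c + k) * M) atTop (𝓝 0) := by
    have h1 : Tendsto (fun k : ℕ => c + (k : ℝ)) atTop atTop :=
      tendsto_atTop_add_const_left _ c tendsto_natCast_atTop_atTop
    have h2 : Tendsto (fun k : ℕ => c / (c + (k : ℝ))) atTop (𝓝 0) :=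
      Tendsto.div_atTop tendsto_const_nhds h1
    simpa using h2.mul_const M
  have := squeeze_zero_norm hbound hg
  have h3 := this.add_const 1
  rw [zero_add] at h3
  refine h3.congr fun k => by ring
end GaussAux

theorem gauss_summation (a b c : ℝ) (hc : 0 < c) (hcab : 0 < c - a - b)
    (hca : ∀ m : ℕ, c - a ≠ -(m : ℝ)) (hcb : ∀ m : ℕ, c - b ≠ -(m : ℝ)) :
    F21 a b c 1 =
      Real.Gamma c * Real.Gamma (c - a - b) /
        (Real.Gamma (c - a) * Real.Gamma (c - b)) := by
  have hF : F21 a b c 1 = ∑' n, GaussAux.t a b c n := by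
    simp [F21, GaussAux.t]
  rw [hF]
  have hlim := (GaussAux.tendsto_ratio a b hc hcab hca hcb).mul
    (GaussAux.tendsto_tail a b hc hcab)
  rw [mul_one] at hlim
  have hconst : Tendsto (fun _ : ℕ => ∑' n, GaussAux.t a b c n) atTop
      (𝓝 (∑' n, GaussAux.t a b c n)) := tendsto_const_nhds
  refine tendsto_nhds_unique hconst (hlim.congr fun k => ?_)
  exact (GaussAux.iterate a b hc hcab k).symm
end

section
/- For every real number a, one has π·a · ∑_{n≥0} (a)ₙ(−a)ₙ/(n!)² = sin(π a); equivalently, for a ≠ 0, ₂F₁(a, −a; 1; 1) = sin(π a)/(π a). -/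
open scoped BigOperators Topology
open Filter

lemma fact_prod (n : ℕ) : (Nat.factorial n : ℝ) = ∏ i ∈ Finset.range n, ((i:ℝ)+1) := by
  induction n with
  | zero => simp
  | succ n ih => rw [Finset.prod_range_succ, ← ih, Nat.factorial_succ]; push_cast; ring

lemma poch_one (n : ℕ) : poch 1 n = (Nat.factorial n : ℝ) := by
  rw [fact_prod, poch]
  exact Finset.prod_congr rfl (fun i _ => by ring)

/-- The term of the series. -/
noncomputable def tt (a : ℝ) (n : ℕ) : ℝ :=
  poch a n * poch (-a) n / ((Nat.factorial n : ℝ)) ^ 2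

lemma tt_eq (a : ℝ) (n : ℕ) :
    tt a n = (∏ i ∈ Finset.range n, ((i:ℝ)^2 - a^2)) / ((Nat.factorial n : ℝ))^2 := by
  rw [tt, poch, poch, ← Finset.prod_mul_distrib]
  congr 1
  exact Finset.prod_congr rfl (fun i _ => by ring)

/-- The partial Euler product. -/
noncomputable def Q (a : ℝ) (n : ℕ) : ℝ := ∏ j ∈ Finset.range n, ((1:ℝ) - a^2 / ((j:ℝ)+1)^2)

lemma Q_eq (a : ℝ) (n : ℕ) :
    Q a n = (∏ i ∈ Finset.range n, (((i:ℝ)+1)^2 - a^2)) / ((Nat.factorial n : ℝ))^2 := by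
  rw [Q, fact_prod, ← Finset.prod_pow, ← Finset.prod_div_distrib]
  refine Finset.prod_congr rfl (fun i _ => ?_)
  have h : ((i:ℝ)+1)^2 ≠ 0 := by positivity
  field_simp

lemma tt_succ (a : ℝ) (n : ℕ) :
    tt a (n+1) = -(a^2) / ((n:ℝ)+1)^2 * Q a n := by
  rw [tt_eq, Q_eq, Finset.prod_range_succ']
  have h2 : (Nat.factorial n : ℝ) ≠ 0 := Nat.cast_ne_zero.2 (Nat.factorial_ne_zero n)
  have h3 : ((n:ℝ)+1) ≠ 0 := by positivity
  have h1 : ((Nat.factorial (n+1) : ℝ)) = ((n:ℝ)+1) * (Nat.factorial n : ℝ) := by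
    rw [Nat.factorial_succ]; push_cast; ring
  rw [h1]
  push_cast
  field_simp
  ring

lemma Q_succ (a : ℝ) (n : ℕ) :
    Q a (n+1) = Q a n * ((1:ℝ) - a^2/((n:ℝ)+1)^2) := by
  rw [Q, Q, Finset.prod_range_succ]

lemma sum_tt (a : ℝ) (n : ℕ) :
    ∑ k ∈ Finset.range (n+1), tt a k = Q a n := by
  induction n with
  | zero => simp [tt, Q, poch]
  | succ n ih =>
    rw [Finset.sum_range_succ, ih, tt_succ, Q_succ]
    ring

lemma tendsto_Q (a : ℝ) (ha : a ≠ 0) :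
    Tendsto (Q a) atTop (𝓝 (Real.sin (Real.pi * a) / (Real.pi * a))) := by
  have hπa : Real.pi * a ≠ 0 := mul_ne_zero Real.pi_ne_zero ha
  have hE := Real.tendsto_euler_sin_prod a
  have h : Tendsto (fun n : ℕ => Real.pi * a * Q a n / (Real.pi * a)) atTop
      (𝓝 (Real.sin (Real.pi * a) / (Real.pi * a))) := hE.div_const _
  have heq : (fun n : ℕ => Real.pi * a * Q a n / (Real.pi * a)) = Q a :=
    funext fun n => mul_div_cancel_left₀ _ hπa
  rwa [heq] at h

lemma summable_tt (a : ℝ) (ha : a ≠ 0) : Summable (tt a) := by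
  have hπa : Real.pi * a ≠ 0 := mul_ne_zero Real.pi_ne_zero ha
  have hQ := tendsto_Q a ha
  obtain ⟨M, hM⟩ := (hQ.norm).bddAbove_range.exists_ge 0
  have hM' : ∀ n, |Q a n| ≤ M := fun n => hM.2 _ ⟨n, rfl⟩
  have hsum : Summable (fun n : ℕ => a^2 * M * (1 / ((n:ℝ)+1)^2)) := by
    have h1 : Summable (fun n : ℕ => 1 / ((n:ℝ)+1)^2) := by
      have := (Real.summable_one_div_nat_pow (p := 2)).2 (by norm_num)
      have := (summable_nat_add_iff 1).2 this
      simpa using this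
    exact h1.mul_left _
  rw [← summable_nat_add_iff 1]
  refine Summable.of_abs (hsum.of_nonneg_of_le (fun n => abs_nonneg _) (fun n => ?_))
  rw [tt_succ, abs_mul, abs_div, abs_neg]
  have h3 : (0:ℝ) < ((n:ℝ)+1)^2 := by positivity
  calc |a^2| / |((n:ℝ)+1)^2| * |Q a n| ≤ a^2 / ((n:ℝ)+1)^2 * M := by
        rw [abs_of_nonneg (sq_nonneg a), abs_of_nonneg h3.le]
        exact mul_le_mul_of_nonneg_left (hM' n) (by positivity)
    _ = a^2 * M * (1 / ((n:ℝ)+1)^2) := by ring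

theorem F21_self_neg_self (a : ℝ) :
    Real.pi * a * (∑' n : ℕ, poch a n * poch (-a) n / ((Nat.factorial n : ℝ)) ^ 2) =
        Real.sin (Real.pi * a) ∧
      (a ≠ 0 → F21 a (-a) 1 1 = Real.sin (Real.pi * a) / (Real.pi * a)) := by
  have hts : (∑' n : ℕ, poch a n * poch (-a) n / ((Nat.factorial n : ℝ)) ^ 2) = ∑' n, tt a n :=
    tsum_congr fun n => rfl
  rcases eq_or_ne a 0 with rfl | ha
  · refine ⟨by simp, by simp⟩
  · have hπa : Real.pi * a ≠ 0 := mul_ne_zero Real.pi_ne_zero ha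
    have hsum := summable_tt a ha
    have hQ := tendsto_Q a ha
    have hQ2 : Tendsto (Q a) atTop (𝓝 (∑' n, tt a n)) := by
      have h1 : Tendsto (fun n : ℕ => ∑ i ∈ Finset.range (n+1), tt a i) atTop
          (𝓝 (∑' n, tt a n)) :=
        hsum.hasSum.tendsto_sum_nat.comp (tendsto_add_atTop_nat 1)
      simpa only [sum_tt] using h1
    have key : (∑' n, tt a n) = Real.sin (Real.pi * a) / (Real.pi * a) :=
      tendsto_nhds_unique hQ2 hQ
    constructor
    · rw [hts, key]
      field_simp
    · intro _
      rw [F21, ← key]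
      refine tsum_congr fun n => ?_
      rw [poch_one, one_pow, mul_one, tt, sq]
end

section
/- Let a, b, c, x be real numbers with c > a > 0 and 0 ≤ x < 1. Then ∫₀¹ t^{a−1} (1−t)^{c−a−1} (1−xt)^{−b} dt = B(a, c−a) · ₂F₁(a, b; c; x), where B(a, c−a) = Γ(a)Γ(c−a)/Γ(c). -/
open scoped BigOperators

open Filter

lemma poch_zero (a : ℝ) : poch a 0 = 1 := by simp [poch]

lemma poch_succ (a : ℝ) (n : ℕ) : poch a (n+1) = poch a n * (a + n) := by
  simp [poch, Finset.prod_range_succ]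

lemma poch_pos {a : ℝ} (ha : 0 < a) (n : ℕ) : 0 < poch a n := by
  apply Finset.prod_pos
  intro i _
  positivity

lemma abs_poch_le (b : ℝ) (n : ℕ) : |poch b n| ≤ poch (|b|+1) n := by
  rw [poch, poch, Finset.abs_prod]
  apply Finset.prod_le_prod (fun i _ => abs_nonneg _)
  intro i _
  calc |b + i| ≤ |b| + |(i:ℝ)| := abs_add_le _ _
  _ ≤ |b| + 1 + i := by rw [abs_of_nonneg (by positivity : (0:ℝ) ≤ i)]; linarith

lemma tendsto_ratio (β : ℝ) (r : ℝ) :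
    Tendsto (fun n : ℕ => (β + n) / (n + 1) * r) atTop (nhds r) := by
  have h : Tendsto (fun n : ℕ => (β + n) / (n + 1)) atTop (nhds 1) := by
    have h1 : (fun n : ℕ => (β + n) / (n + 1)) = fun n : ℕ => ((β - 1) / (n + 1) + 1) := by
      funext n
      field_simp
      ring
    rw [h1]
    have := (tendsto_natCast_atTop_atTop (R := ℝ)).atTop_add tendsto_const_nhds (C := 1)
    have h2 := Tendsto.div_atTop (tendsto_const_nhds (x := β - 1)) this
    simpa using h2.add_const 1
  simpa using h.mul_const r

lemma summable_poch {β r : ℝ} (hβ : 0 < β) (hr0 : 0 ≤ r) (hr : r < 1) :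
    Summable (fun n => poch β n / (Nat.factorial n : ℝ) * r ^ n) := by
  set l := (1 + r) / 2 with hl
  have hl1 : l < 1 := by rw [hl]; linarith
  have hrl : r < l := by rw [hl]; linarith
  apply summable_of_ratio_norm_eventually_le hl1
  have hev : ∀ᶠ n : ℕ in atTop, (β + n) / (n + 1) * r ≤ l :=
    (tendsto_ratio β r).eventually_le_const hrl
  filter_upwards [hev] with n hn
  have hp := poch_pos hβ n
  have hfac : (0:ℝ) < (Nat.factorial n : ℝ) := by positivity
  have h1 : (0:ℝ) ≤ poch β n / (Nat.factorial n : ℝ) * r ^ n := by positivity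
  have h2 : (0:ℝ) ≤ poch β (n+1) / (Nat.factorial (n+1) : ℝ) * r ^ (n+1) := by
    have := poch_pos hβ (n+1); positivity
  rw [Real.norm_of_nonneg h2, Real.norm_of_nonneg h1]
  have key : poch β (n+1) / (Nat.factorial (n+1) : ℝ) * r ^ (n+1)
      = ((β + n) / (n + 1) * r) * (poch β n / (Nat.factorial n : ℝ) * r ^ n) := by
    rw [poch_succ, Nat.factorial_succ, pow_succ]
    push_cast
    field_simp
  rw [key]
  apply mul_le_mul_of_nonneg_right hn h1

lemma tendsto_ratio2 (β : ℝ) (r : ℝ) :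
    Tendsto (fun n : ℕ => (β + n) / n * r) atTop (nhds r) := by
  have h : Tendsto (fun n : ℕ => (β + n) / n) atTop (nhds 1) := by
    have h0 : Tendsto (fun n : ℕ => β / n + 1) atTop (nhds 1) := by
      simpa using (tendsto_const_div_atTop_nhds_zero_nat β).add_const 1
    apply h0.congr'
    filter_upwards [eventually_ge_atTop 1] with n hn
    have hn' : (n:ℝ) ≠ 0 := by positivity
    field_simp
  simpa using h.mul_const r

lemma summable_poch_deriv {β r : ℝ} (hβ : 0 < β) (hr0 : 0 < r) (hr : r < 1) :
    Summable (fun n : ℕ => (n : ℝ) * (poch β n / (Nat.factorial n : ℝ)) * r ^ (n - 1)) := by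
  set l := (1 + r) / 2 with hl
  have hl1 : l < 1 := by rw [hl]; linarith
  have hrl : r < l := by rw [hl]; linarith
  apply summable_of_ratio_norm_eventually_le hl1
  have hev : ∀ᶠ n : ℕ in atTop, (β + n) / n * r ≤ l :=
    (tendsto_ratio2 β r).eventually_le_const hrl
  filter_upwards [hev, eventually_ge_atTop 1] with n hn hn1
  have hp := poch_pos hβ n
  have hn0 : (0:ℝ) < n := by exact_mod_cast hn1
  have h1 : (0:ℝ) ≤ (n : ℝ) * (poch β n / (Nat.factorial n : ℝ)) * r ^ (n - 1) := by positivity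
  have h2 : (0:ℝ) ≤ ((n+1 : ℕ) : ℝ) * (poch β (n+1) / (Nat.factorial (n+1) : ℝ)) * r ^ ((n+1) - 1) := by
    have := poch_pos hβ (n+1); positivity
  rw [Real.norm_of_nonneg h2, Real.norm_of_nonneg h1]
  have hsub : n - 1 + 1 = n := Nat.succ_pred_eq_of_pos hn1
  have key : ((n+1 : ℕ) : ℝ) * (poch β (n+1) / (Nat.factorial (n+1) : ℝ)) * r ^ ((n+1) - 1)
      = ((β + n) / n * r) * ((n : ℝ) * (poch β n / (Nat.factorial n : ℝ)) * r ^ (n - 1)) := by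
    rw [poch_succ, Nat.factorial_succ, Nat.add_sub_cancel, ← hsub, pow_succ]
    push_cast
    have hfac : ((Nat.factorial n : ℝ)) ≠ 0 := by positivity
    field_simp
  rw [key]
  exact mul_le_mul_of_nonneg_right hn h1

lemma hasSum_binomial (b : ℝ) {u : ℝ} (hu0 : 0 ≤ u) (hu1 : u < 1) :
    HasSum (fun n : ℕ => poch b n / (Nat.factorial n : ℝ) * u ^ n) ((1 - u) ^ (-b)) := by
  set c : ℕ → ℝ := fun n => poch b n / (Nat.factorial n : ℝ) with hc
  set d : ℝ := |b| + 1 with hdd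
  have hd : 0 < d := by positivity
  set r : ℝ := (1 + u) / 2 with hrr
  have hur : u < r := by rw [hrr]; linarith
  have hr1 : r < 1 := by rw [hrr]; linarith
  have hr0 : 0 < r := by rw [hrr]; linarith
  have habs : ∀ n, |c n| ≤ poch d n / (Nat.factorial n : ℝ) := by
    intro n
    rw [hc]
    simp only []
    rw [abs_div, abs_of_nonneg (by positivity : (0:ℝ) ≤ (Nat.factorial n : ℝ))]
    exact div_le_div_of_nonneg_right (abs_poch_le b n) (by positivity) |>.trans_eq rfl
  -- summability on the ball
  have hsum : ∀ y : ℝ, |y| < r → Summable (fun n => c n * y ^ n) := by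
    intro y hy
    apply Summable.of_norm_bounded (summable_poch hd hr0.le hr1)
    intro n
    rw [norm_mul, norm_pow]
    calc ‖c n‖ * ‖y‖ ^ n ≤ (poch d n / (Nat.factorial n : ℝ)) * r ^ n := by
          apply mul_le_mul (habs n) (pow_le_pow_left₀ (abs_nonneg y) hy.le n)
            (by positivity) (div_nonneg (poch_pos hd n).le (by positivity))
      _ = _ := rfl
  set S : ℝ → ℝ := fun y => ∑' n, c n * y ^ n with hS
  set S1 : ℝ → ℝ := fun y => ∑' n, c n * ((n : ℝ) * y ^ (n - 1)) with hS1
  have hball : ∀ y : ℝ, y ∈ Metric.ball (0:ℝ) r ↔ |y| < r := by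
    intro y; rw [Metric.mem_ball, Real.dist_eq, sub_zero]
  have hUsum := summable_poch_deriv hd hr0 hr1
  have hbound : ∀ (n : ℕ) (y : ℝ), y ∈ Metric.ball (0:ℝ) r →
      ‖c n * ((n : ℝ) * y ^ (n - 1))‖ ≤ (n : ℝ) * (poch d n / (Nat.factorial n : ℝ)) * r ^ (n - 1) := by
    intro n y hy
    rw [hball] at hy
    rw [norm_mul, norm_mul, norm_pow, Real.norm_natCast]
    calc ‖c n‖ * ((n:ℝ) * ‖y‖ ^ (n-1)) ≤ (poch d n / (Nat.factorial n : ℝ)) * ((n:ℝ) * r ^ (n-1)) := by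
          apply mul_le_mul (habs n) ?_ (by positivity) (div_nonneg (poch_pos hd n).le (by positivity))
          exact mul_le_mul_of_nonneg_left (pow_le_pow_left₀ (abs_nonneg y) hy.le _) (by positivity)
      _ = _ := by ring
  have hderiv : ∀ y : ℝ, y ∈ Metric.ball (0:ℝ) r → HasDerivAt S (S1 y) y := by
    intro y hy
    exact hasDerivAt_tsum_of_isPreconnected hUsum Metric.isOpen_ball
      ((convex_ball _ _).isPreconnected)
      (fun n z _ => by simpa using (hasDerivAt_pow n z).const_mul (c n))
      hbound (Metric.mem_ball_self hr0)
      (hsum 0 (by simpa using hr0)) hy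
  have hode : ∀ y : ℝ, |y| < r → (1 - y) * S1 y = b * S y := by
    intro y hy
    have hSsum := (hsum y hy).hasSum
    have hS1summ : Summable (fun n => c n * ((n : ℝ) * y ^ (n - 1))) :=
      Summable.of_norm_bounded hUsum (fun n => hbound n y ((hball y).mpr hy))
    have hT := hS1summ.hasSum
    have hshift : HasSum (fun n : ℕ => c (n+1) * (((n:ℝ)+1) * y ^ n)) (S1 y) := by
      have h0 : c 0 * ((0:ℝ) * y ^ (0 - 1)) = 0 := by simp
      have := (hasSum_nat_add_iff' (f := fun n => c n * ((n : ℝ) * y ^ (n - 1))) 1).mpr hT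
      rw [Finset.sum_range_one] at this
      norm_num at this
      exact this
    have hterm : ∀ n : ℕ, c (n+1) * (((n:ℝ)+1) * y ^ n)
        = b * (c n * y ^ n) + y * (c n * ((n:ℝ) * y ^ (n - 1))) := by
      intro n
      have hc1 : c (n+1) * ((n:ℝ)+1) = c n * (b + n) := by
        rw [hc]
        simp only []
        rw [poch_succ, Nat.factorial_succ]
        push_cast
        have h1 : ((Nat.factorial n : ℝ)) ≠ 0 := by positivity
        field_simp
      have hyn : (n:ℝ) * y ^ n = y * ((n:ℝ) * y ^ (n - 1)) := by
        cases n with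
        | zero => simp
        | succ m => rw [Nat.add_sub_cancel, pow_succ']; push_cast; ring
      calc c (n+1) * (((n:ℝ)+1) * y ^ n) = (c (n+1) * ((n:ℝ)+1)) * y ^ n := by ring
        _ = c n * (b + n) * y ^ n := by rw [hc1]
        _ = b * (c n * y ^ n) + (n:ℝ) * y ^ n * c n := by ring
        _ = b * (c n * y ^ n) + y * (c n * ((n:ℝ) * y ^ (n - 1))) := by rw [hyn]; ring
    have hcomb : HasSum (fun n : ℕ => b * (c n * y ^ n) + y * (c n * ((n:ℝ) * y ^ (n - 1))))
        (b * S y + y * S1 y) := (hSsum.mul_left b).add (hT.mul_left y)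
    have := hshift.unique (by simpa only [hterm] using hcomb)
    linarith [this]
  -- H is constant
  set H : ℝ → ℝ := fun y => S y * (1 - y) ^ b with hH
  have hHderiv : ∀ y : ℝ, |y| < r → HasDerivAt H 0 y := by
    intro y hy
    have h1y : (0:ℝ) < 1 - y := by
      have : y < r := (abs_lt.mp hy).2
      linarith
    have hd1 : HasDerivAt (fun z : ℝ => 1 - z) (-1) y := by
      simpa using (hasDerivAt_id y).const_sub 1
    have hd2 : HasDerivAt (fun z : ℝ => (1 - z) ^ b) (b * (1-y) ^ (b-1) * (-1)) y :=
      (Real.hasDerivAt_rpow_const (Or.inl h1y.ne')).comp y hd1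
    have hd3 := ((hderiv y ((hball y).mpr hy)).mul hd2)
    have hval : S1 y * (1 - y) ^ b + S y * (b * (1-y) ^ (b-1) * (-1)) = 0 := by
      have hpow : (1 - y) ^ b = (1 - y) ^ (b - 1) * (1 - y) := by
        rw [← Real.rpow_add_one h1y.ne' (b-1)]
        ring_nf
      rw [hpow]
      have hod := hode y hy
      linear_combination (1 - y) ^ (b - 1) * hod
    rw [hval] at hd3
    exact hd3
  have hHconst : H u = H 0 := by
    have hmem : ∀ z ∈ Set.Icc (0:ℝ) u, |z| < r := by
      intro z hz
      rw [abs_of_nonneg hz.1]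
      exact lt_of_le_of_lt hz.2 hur
    exact constant_of_has_deriv_right_zero
      (fun z hz => ((hHderiv z (hmem z hz)).continuousAt).continuousWithinAt)
      (fun z hz => ((hHderiv z (hmem z (Set.mem_Icc.mpr ⟨hz.1, hz.2.le⟩))).hasDerivWithinAt))
      u (Set.mem_Icc.mpr ⟨hu0, le_refl u⟩)
  have hS0 : S 0 = 1 := by
    rw [hS]
    simp only []
    rw [tsum_eq_single 0 (fun n hn => by simp [zero_pow hn])]
    simp [hc, poch_zero]
  have hH0 : H 0 = 1 := by
    show S 0 * (1 - 0) ^ b = 1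
    rw [hS0]; norm_num
  have h1u : (0:ℝ) < 1 - u := by linarith
  have hSu : S u = (1 - u) ^ (-b) := by
    have key : S u * (1 - u) ^ b = 1 := hHconst.trans hH0
    rw [Real.rpow_neg h1u.le]
    exact eq_inv_of_mul_eq_one_left (mul_comm (S u) _ ▸ key)
  have := (hsum u (by rwa [abs_of_nonneg hu0])).hasSum
  rwa [show (∑' n, c n * u ^ n) = S u from rfl, hSu] at this

lemma Gamma_add_nat {a : ℝ} (ha : 0 < a) (n : ℕ) :
    Real.Gamma (a + n) = poch a n * Real.Gamma a := by
  induction n with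
  | zero => simp [poch_zero]
  | succ m ih =>
    have hm : (0:ℝ) < a + m := by positivity
    have : a + ((m:ℕ)+1 : ℕ) = (a + m) + 1 := by push_cast; ring
    rw [this, Real.Gamma_add_one hm.ne', ih, poch_succ]
    ring

lemma real_beta {p q : ℝ} (hp : 0 < p) (hq : 0 < q) :
    ∫ t in (0:ℝ)..1, t ^ (p - 1) * (1 - t) ^ (q - 1)
      = Real.Gamma p * Real.Gamma q / Real.Gamma (p + q) := by
  have hpq : (0:ℝ) < p + q := by linarith
  have key := Complex.Gamma_mul_Gamma_eq_betaIntegral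
    (s := (p:ℂ)) (t := (q:ℂ)) (by simpa using hp) (by simpa using hq)
  have hbeta : Complex.betaIntegral p q
      = ((∫ t in (0:ℝ)..1, t ^ (p - 1) * (1 - t) ^ (q - 1) : ℝ) : ℂ) := by
    rw [Complex.betaIntegral, ← intervalIntegral.integral_ofReal]
    apply intervalIntegral.integral_congr
    intro t ht
    rw [Set.uIcc_of_le (by norm_num : (0:ℝ) ≤ 1)] at ht
    have ht0 : 0 ≤ t := ht.1
    have ht1 : 0 ≤ 1 - t := by linarith [ht.2]
    have e1 : ((p:ℂ) - 1) = ((p - 1 : ℝ) : ℂ) := by push_cast; ring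
    have e2 : ((q:ℂ) - 1) = ((q - 1 : ℝ) : ℂ) := by push_cast; ring
    have e3 : ((1:ℂ) - (t:ℂ)) = ((1 - t : ℝ) : ℂ) := by push_cast; ring
    beta_reduce
    rw [e1, e2, e3, ← Complex.ofReal_cpow ht0, ← Complex.ofReal_cpow ht1]
    push_cast
    ring
  rw [hbeta] at key
  have hgc : Real.Gamma (p + q) ≠ 0 := (Real.Gamma_pos_of_pos hpq).ne'
  have key2 : (Real.Gamma p * Real.Gamma q : ℝ)
      = Real.Gamma (p + q) * ∫ t in (0:ℝ)..1, t ^ (p - 1) * (1 - t) ^ (q - 1) := by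
    have := key
    rw [Complex.Gamma_ofReal, Complex.Gamma_ofReal] at this
    have hc : ((p:ℂ) + q) = ((p + q : ℝ) : ℂ) := by push_cast; ring
    rw [hc, Complex.Gamma_ofReal] at this
    exact_mod_cast this
  rw [key2]
  field_simp

lemma beta_integrable {p q : ℝ} (hp : 0 < p) (hq : 0 < q) :
    MeasureTheory.IntegrableOn (fun t : ℝ => t ^ (p - 1) * (1 - t) ^ (q - 1))
      (Set.Ioc (0:ℝ) 1) MeasureTheory.volume := by
  have hC := Complex.betaIntegral_convergent (u := (p:ℂ)) (v := (q:ℂ))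
    (by simpa using hp) (by simpa using hq)
  rw [intervalIntegrable_iff_integrableOn_Ioc_of_le (by norm_num)] at hC
  have heq : Set.EqOn (fun x : ℝ => (x:ℂ) ^ ((p:ℂ) - 1) * ((1:ℂ) - (x:ℂ)) ^ ((q:ℂ) - 1))
      (fun x : ℝ => ((x ^ (p - 1) * (1 - x) ^ (q - 1) : ℝ) : ℂ)) (Set.Ioc (0:ℝ) 1) := by
    intro t ht
    have ht0 : (0:ℝ) ≤ t := ht.1.le
    have ht1 : (0:ℝ) ≤ 1 - t := by linarith [ht.2]
    simp only []
    have e1 : ((p:ℂ) - 1) = ((p - 1 : ℝ) : ℂ) := by push_cast; ring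
    have e2 : ((q:ℂ) - 1) = ((q - 1 : ℝ) : ℂ) := by push_cast; ring
    have e3 : ((1:ℂ) - (t:ℂ)) = ((1 - t : ℝ) : ℂ) := by push_cast; ring
    rw [e1, e2, e3, ← Complex.ofReal_cpow ht0, ← Complex.ofReal_cpow ht1]
    push_cast
    ring
  have h2 := hC.congr_fun heq measurableSet_Ioc
  have h3 := h2.re
  simpa [MeasureTheory.IntegrableOn] using h3

theorem euler_integral_repr (a b c x : ℝ) (ha : 0 < a) (hca : a < c)
    (hx0 : 0 ≤ x) (hx1 : x < 1) :
    ∫ t in (0:ℝ)..1, t ^ (a - 1) * (1 - t) ^ (c - a - 1) * (1 - x * t) ^ (-b) =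
      (Real.Gamma a * Real.Gamma (c - a) / Real.Gamma c) * F21 a b c x := by
  have hq : (0:ℝ) < c - a := by linarith
  set d : ℝ := |b| + 1 with hdd
  have hd : 0 < d := by positivity
  set C : ℕ → ℝ := fun n => poch b n / (Nat.factorial n : ℝ) * x ^ n with hC
  set F : ℕ → ℝ → ℝ := fun n t => C n * (t ^ (a + n - 1) * (1 - t) ^ (c - a - 1)) with hF
  -- integrability of each term
  have hpn : ∀ n : ℕ, (0:ℝ) < a + n := fun n => by positivity
  have hInt : ∀ n : ℕ, MeasureTheory.IntegrableOn
      (fun t : ℝ => t ^ (a + n - 1) * (1 - t) ^ (c - a - 1)) (Set.Ioc (0:ℝ) 1)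
      MeasureTheory.volume := fun n => beta_integrable (hpn n) hq
  have hF_int : ∀ n : ℕ, MeasureTheory.Integrable (F n)
      (MeasureTheory.volume.restrict (Set.Ioc (0:ℝ) 1)) := by
    intro n
    exact (hInt n).const_mul (C n)
  -- the basic nonnegativity
  have hnn : ∀ (p : ℝ) (t : ℝ), t ∈ Set.Ioc (0:ℝ) 1 →
      (0:ℝ) ≤ t ^ p * (1 - t) ^ (c - a - 1) := by
    intro p t ht
    have h1 : (0:ℝ) ≤ t := ht.1.le
    have h2 : (0:ℝ) ≤ 1 - t := by linarith [ht.2]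
    positivity
  -- value of each integral
  have hbase : ∀ n : ℕ, ∫ t in (0:ℝ)..1, t ^ (a + n - 1) * (1 - t) ^ (c - a - 1)
      = Real.Gamma (a + n) * Real.Gamma (c - a) / Real.Gamma (c + n) := by
    intro n
    have := real_beta (hpn n) hq
    rw [show a + (n:ℝ) + (c - a) = c + n by ring] at this
    exact this
  -- monotonicity bound: each beta integral is at most the n = 0 one
  have hII : ∀ n : ℕ, IntervalIntegrable
      (fun t : ℝ => t ^ (a + n - 1) * (1 - t) ^ (c - a - 1)) MeasureTheory.volume 0 1 := by
    intro n
    rw [intervalIntegrable_iff_integrableOn_Ioc_of_le (by norm_num)]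
    exact hInt n
  have hmono : ∀ n : ℕ, (∫ t in (0:ℝ)..1, t ^ (a + n - 1) * (1 - t) ^ (c - a - 1))
      ≤ ∫ t in (0:ℝ)..1, t ^ (a + (0:ℕ) - 1) * (1 - t) ^ (c - a - 1) := by
    intro n
    apply intervalIntegral.integral_mono_on (by norm_num) (hII n) (hII 0)
    intro t ht
    rcases eq_or_lt_of_le ht.1 with h | h
    · rw [← h]
      cases n with
      | zero => exact le_refl _
      | succ m =>
        have hpos : (0:ℝ) < a + (m+1 : ℕ) - 1 := by push_cast; linarith
        rw [Real.zero_rpow hpos.ne', zero_mul]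
        exact mul_nonneg (Real.rpow_nonneg le_rfl _) (Real.rpow_nonneg (by norm_num) _)
    · have h2 : (0:ℝ) ≤ 1 - t := by linarith [ht.2]
      apply mul_le_mul_of_nonneg_right _ (by positivity)
      apply Real.rpow_le_rpow_of_exponent_ge h (ht.2) (by push_cast; linarith)
  -- norm integrals
  have habsC : ∀ n : ℕ, |C n| ≤ poch d n / (Nat.factorial n : ℝ) * x ^ n := by
    intro n
    rw [hC]
    simp only []
    rw [abs_mul, abs_div, abs_of_nonneg (by positivity : (0:ℝ) ≤ (Nat.factorial n : ℝ)),
      abs_pow, abs_of_nonneg hx0]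
    apply mul_le_mul_of_nonneg_right _ (by positivity)
    exact div_le_div_of_nonneg_right (abs_poch_le b n) (by positivity)
  have hnormint : ∀ n : ℕ, (∫ t in Set.Ioc (0:ℝ) 1, ‖F n t‖)
      = |C n| * ∫ t in (0:ℝ)..1, t ^ (a + n - 1) * (1 - t) ^ (c - a - 1) := by
    intro n
    rw [intervalIntegral.integral_of_le (by norm_num : (0:ℝ) ≤ 1)]
    rw [← MeasureTheory.integral_const_mul]
    apply MeasureTheory.setIntegral_congr_fun measurableSet_Ioc
    intro t ht
    simp only [hF]
    rw [Real.norm_eq_abs, abs_mul, abs_of_nonneg (hnn _ t ht)]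
  have hInonneg : ∀ n : ℕ, (0:ℝ) ≤ ∫ t in (0:ℝ)..1, t ^ (a + n - 1) * (1 - t) ^ (c - a - 1) := by
    intro n
    apply intervalIntegral.integral_nonneg (by norm_num)
    intro t ht
    exact mul_nonneg (Real.rpow_nonneg ht.1 _) (Real.rpow_nonneg (by linarith [ht.2]) _)
  set I0 : ℝ := ∫ t in (0:ℝ)..1, t ^ (a + (0:ℕ) - 1) * (1 - t) ^ (c - a - 1) with hI0
  have hF_sum : Summable fun n : ℕ => ∫ t in Set.Ioc (0:ℝ) 1, ‖F n t‖ := by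
    refine Summable.of_nonneg_of_le
      (fun n => MeasureTheory.integral_nonneg (fun t => norm_nonneg _))
      (fun n => ?_) ((summable_poch hd hx0 hx1).mul_right I0)
    rw [hnormint n]
    apply mul_le_mul (habsC n) (hmono n) (hInonneg n)
    have := poch_pos hd n
    positivity
  -- pointwise sum
  have hpt : ∀ t ∈ Set.Ioc (0:ℝ) 1, HasSum (fun n => F n t)
      (t ^ (a - 1) * (1 - t) ^ (c - a - 1) * (1 - x * t) ^ (-b)) := by
    intro t ht
    have ht0 : (0:ℝ) < t := ht.1
    have hu0 : (0:ℝ) ≤ x * t := by positivity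
    have hu1 : x * t < 1 := by
      calc x * t ≤ x * 1 := mul_le_mul_of_nonneg_left ht.2 hx0
      _ = x := mul_one x
      _ < 1 := hx1
    have hbs := (hasSum_binomial b hu0 hu1).mul_left (t ^ (a - 1) * (1 - t) ^ (c - a - 1))
    have heq : ∀ n : ℕ, t ^ (a - 1) * (1 - t) ^ (c - a - 1)
        * (poch b n / (Nat.factorial n : ℝ) * (x * t) ^ n) = F n t := by
      intro n
      rw [hF, hC]
      simp only []
      rw [show a + (n:ℝ) - 1 = (a - 1) + n from by ring, Real.rpow_add ht0,
        Real.rpow_natCast, mul_pow]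
      ring
    rwa [funext heq] at hbs
  -- glue
  rw [intervalIntegral.integral_of_le (by norm_num : (0:ℝ) ≤ 1)]
  have hHS := MeasureTheory.hasSum_integral_of_summable_integral_norm hF_int hF_sum
  have hsum_eq : (∫ t in Set.Ioc (0:ℝ) 1, ∑' n, F n t)
      = ∫ t in Set.Ioc (0:ℝ) 1, t ^ (a - 1) * (1 - t) ^ (c - a - 1) * (1 - x * t) ^ (-b) :=
    MeasureTheory.setIntegral_congr_fun measurableSet_Ioc (fun t ht => (hpt t ht).tsum_eq)
  rw [hsum_eq] at hHS
  set B0 : ℝ := Real.Gamma a * Real.Gamma (c - a) / Real.Gamma c with hB0def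
  have hc0 : (0:ℝ) < c := by linarith
  have hB0 : (0:ℝ) < B0 := by
    rw [hB0def]
    have := Real.Gamma_pos_of_pos ha
    have := Real.Gamma_pos_of_pos hq
    have := Real.Gamma_pos_of_pos hc0
    positivity
  have hterm : ∀ n : ℕ, (∫ t in Set.Ioc (0:ℝ) 1, F n t)
      = B0 * (poch a n * poch b n / (poch c n * (Nat.factorial n : ℝ)) * x ^ n) := by
    intro n
    rw [← intervalIntegral.integral_of_le (by norm_num : (0:ℝ) ≤ 1)]
    have : (∫ t in (0:ℝ)..1, F n t)
        = C n * ∫ t in (0:ℝ)..1, t ^ (a + n - 1) * (1 - t) ^ (c - a - 1) := by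
      rw [hF]
      simp only []
      rw [← intervalIntegral.integral_const_mul]
    rw [this, hbase n, Gamma_add_nat ha n, Gamma_add_nat hc0 n, hC, hB0def]
    simp only []
    have h1 := (Real.Gamma_pos_of_pos ha).ne'
    have h2 := (Real.Gamma_pos_of_pos hq).ne'
    have h3 := (Real.Gamma_pos_of_pos hc0).ne'
    have h4 := (poch_pos hc0 n).ne'
    have h5 : ((Nat.factorial n : ℝ)) ≠ 0 := by positivity
    field_simp
  simp only [hterm] at hHS
  have h2 := hHS.mul_left B0⁻¹
  simp only [← mul_assoc, inv_mul_cancel₀ hB0.ne', one_mul] at h2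
  rw [F21, h2.tsum_eq, ← mul_assoc, mul_inv_cancel₀ hB0.ne', one_mul]
end
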